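/- Let 0 < ε ≤ 0.1 and n ≥ 10, and let T be a positive integer with 4ε²·T ≤ ln(n/10). Then D_KL( P_mix^T ‖ P_0^T ) ≤ 1/10. -/

import Mathlib

open scoped BigOperators

/-- The sample space of a single round: an advice vector `a ∈ {0,1}ⁿ`
and a correct-arm indicator `c ∈ {0,1}`. -/
abbrev Omg (n : ℕ) := (Fin n → Bool) × Bool

/-- Under `P0`, the advice vector is uniform on `{0,1}ⁿ` and the correct-arm
indicator is uniform on `{0,1}`, independently. -/
noncomputable def P0 (n : ℕ) : Omg n → ℝ := fun _ => (1 / 2 : ℝ) ^ (n + 1)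

/-- Under `Pv n ε v`, the advice vector is uniform on `{0,1}ⁿ` and, conditionally on it,
the correct-arm indicator equals its `v`-th entry with probability `1/2 + ε`. -/
noncomputable def Pv (n : ℕ) (ε : ℝ) (v : Fin n) : Omg n → ℝ := fun w =>
  (1 / 2 : ℝ) ^ n * (if w.2 = w.1 v then 1 / 2 + ε else 1 / 2 - ε)

/-- `T`-fold product of a probability mass function on `Omg n`. -/
noncomputable def prodP {n : ℕ} (T : ℕ) (P : Omg n → ℝ) : (Fin T → Omg n) → ℝ :=
  fun g => ∏ t, P (g t)

/-- The uniform mixture `P_mix^T = (1/n) Σ_v P_v^T`. -/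
noncomputable def Pmix (n : ℕ) (ε : ℝ) (T : ℕ) : (Fin T → Omg n) → ℝ := fun g =>
  (1 / (n : ℝ)) * ∑ v : Fin n, prodP T (Pv n ε v) g

/-- Kullback–Leibler divergence between two probability mass functions on a finite type
(with the convention `0 · ln 0 = 0`, which holds definitionally here since
`Real.log 0 = 0` and `0 * x = 0`). -/
noncomputable def klDiv {α : Type*} [Fintype α] (P Q : α → ℝ) : ℝ :=
  ∑ g, P g * Real.log (P g / Q g)

/-! ### Auxiliary development -/

/-- Sign function: `+1` if `c = x`, `-1` otherwise. -/
noncomputable def sgn (c x : Bool) : ℝ := if c = x then 1 else -1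

lemma sgn_not (c x : Bool) : sgn c (!x) = - sgn c x := by
  cases c <;> cases x <;> simp [sgn]

lemma sgn_mul_self (c x : Bool) : sgn c x * sgn c x = 1 := by
  cases c <;> cases x <;> norm_num [sgn]

/-- Flip coordinate `u` of a boolean vector. -/
def flipAt {n : ℕ} (u : Fin n) (a : Fin n → Bool) : Fin n → Bool :=
  Function.update a u (!(a u))

lemma flipAt_apply_self {n : ℕ} (u : Fin n) (a : Fin n → Bool) :
    flipAt u a u = !(a u) := by
  simp [flipAt]

lemma flipAt_apply_ne {n : ℕ} {u v : Fin n} (h : v ≠ u) (a : Fin n → Bool) :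
    flipAt u a v = a v := by
  simp [flipAt, Function.update_of_ne h]

lemma flipAt_invol {n : ℕ} (u : Fin n) : Function.Involutive (flipAt u) := by
  intro a
  funext i
  by_cases h : i = u
  · subst h
    rw [flipAt_apply_self, flipAt_apply_self, Bool.not_not]
  · rw [flipAt_apply_ne h, flipAt_apply_ne h]

lemma sum_sgn (n : ℕ) (c : Bool) (u : Fin n) :
    ∑ a : Fin n → Bool, sgn c (a u) = 0 := by
  have h := Equiv.sum_comp ((flipAt_invol u).toPerm (flipAt u))
    (fun a : Fin n → Bool => sgn c (a u))
  have h2 : ∀ a : Fin n → Bool,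
      sgn c ((((flipAt_invol u).toPerm (flipAt u)) a) u) = - sgn c (a u) := by
    intro a
    have : (((flipAt_invol u).toPerm (flipAt u)) a) = flipAt u a := rfl
    rw [this, flipAt_apply_self, sgn_not]
  simp only [h2] at h
  rw [Finset.sum_neg_distrib] at h
  linarith

lemma sum_sgn_mul (n : ℕ) (c : Bool) {u v : Fin n} (huv : u ≠ v) :
    ∑ a : Fin n → Bool, sgn c (a u) * sgn c (a v) = 0 := by
  have h := Equiv.sum_comp ((flipAt_invol u).toPerm (flipAt u))
    (fun a : Fin n → Bool => sgn c (a u) * sgn c (a v))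
  have h2 : ∀ a : Fin n → Bool,
      sgn c ((((flipAt_invol u).toPerm (flipAt u)) a) u) *
        sgn c ((((flipAt_invol u).toPerm (flipAt u)) a) v)
      = - (sgn c (a u) * sgn c (a v)) := by
    intro a
    have he : (((flipAt_invol u).toPerm (flipAt u)) a) = flipAt u a := rfl
    rw [he, flipAt_apply_self, flipAt_apply_ne (Ne.symm huv), sgn_not]
    ring
  simp only [h2] at h
  rw [Finset.sum_neg_distrib] at h
  linarith

lemma Pv_eq (n : ℕ) (ε : ℝ) (v : Fin n) (w : Omg n) :
    Pv n ε v w = (1 / 2 : ℝ) ^ n * (1 / 2 + ε * sgn w.2 (w.1 v)) := by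
  unfold Pv sgn
  by_cases h : w.2 = w.1 v <;> simp [h] <;> ring

lemma card_fun_bool (n : ℕ) : (Fintype.card (Fin n → Bool) : ℝ) = 2 ^ n := by
  rw [Fintype.card_fun]
  simp

lemma single_round (n : ℕ) (ε : ℝ) (u v : Fin n) :
    ∑ w : Omg n, Pv n ε u w * Pv n ε v w / P0 n w
      = if u = v then 1 + 4 * ε ^ 2 else 1 := by
  have hterm : ∀ w : Omg n, Pv n ε u w * Pv n ε v w / P0 n w
      = 2 * (1 / 2 : ℝ) ^ n *
        ((1 / 2 + ε * sgn w.2 (w.1 u)) * (1 / 2 + ε * sgn w.2 (w.1 v))) := by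
    intro w
    rw [Pv_eq, Pv_eq]
    unfold P0
    rw [pow_succ]
    have hK : ((1 / 2 : ℝ)) ^ n ≠ 0 := by positivity
    field_simp
  simp only [hterm]
  rw [← Finset.mul_sum, Fintype.sum_prod_type_right]
  have hinner : ∀ c : Bool, ∑ a : Fin n → Bool,
      (1 / 2 + ε * sgn c (a u)) * (1 / 2 + ε * sgn c (a v))
      = (2 : ℝ) ^ n * (1 / 4 + if u = v then ε ^ 2 else 0) := by
    intro c
    have hexp : ∀ a : Fin n → Bool,
        (1 / 2 + ε * sgn c (a u)) * (1 / 2 + ε * sgn c (a v))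
        = 1 / 4 + ((ε / 2) * sgn c (a u) + ((ε / 2) * sgn c (a v)
            + ε ^ 2 * (sgn c (a u) * sgn c (a v)))) := by
      intro a; ring
    simp only [hexp]
    rw [Finset.sum_add_distrib, Finset.sum_add_distrib, Finset.sum_add_distrib,
      ← Finset.mul_sum, ← Finset.mul_sum, ← Finset.mul_sum, sum_sgn, sum_sgn,
      Finset.sum_const, Finset.card_univ]
    by_cases huv : u = v
    · subst huv
      simp only [sgn_mul_self]
      rw [Finset.sum_const, Finset.card_univ]
      simp only [if_true, nsmul_eq_mul, card_fun_bool]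
      ring
    · rw [sum_sgn_mul n c huv, if_neg huv, nsmul_eq_mul, card_fun_bool]
      ring
  simp only [hinner]
  rw [Finset.sum_const, Finset.card_univ]
  have hpow : (1 / 2 : ℝ) ^ n * (2 : ℝ) ^ n = 1 := by
    rw [← mul_pow]; norm_num
  have hcard : (Fintype.card Bool) = 2 := by simp
  rw [hcard]
  by_cases huv : u = v
  · rw [if_pos huv, if_pos huv, nsmul_eq_mul]
    push_cast
    nlinarith [hpow]
  · rw [if_neg huv, if_neg huv, nsmul_eq_mul]
    push_cast
    nlinarith [hpow]

lemma prod_chi (n T : ℕ) (ε : ℝ) (u v : Fin n) :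
    ∑ g : Fin T → Omg n,
        prodP T (Pv n ε u) g * prodP T (Pv n ε v) g / prodP T (P0 n) g
      = (if u = v then 1 + 4 * ε ^ 2 else 1) ^ T := by
  have h : ∀ g : Fin T → Omg n,
      prodP T (Pv n ε u) g * prodP T (Pv n ε v) g / prodP T (P0 n) g
      = ∏ t, (Pv n ε u (g t) * Pv n ε v (g t) / P0 n (g t)) := by
    intro g
    unfold prodP
    rw [Finset.prod_div_distrib, Finset.prod_mul_distrib]
  simp only [h]
  have h2 := Finset.prod_univ_sum (fun _ : Fin T => (Finset.univ : Finset (Omg n)))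
    (fun _ w => Pv n ε u w * Pv n ε v w / P0 n w)
  rw [Fintype.piFinset_univ] at h2
  rw [← h2]
  rw [Finset.prod_congr rfl (fun t _ => single_round n ε u v), Finset.prod_const,
    Finset.card_univ, Fintype.card_fin]

lemma sum_Pv (n : ℕ) (ε : ℝ) (v : Fin n) : ∑ w : Omg n, Pv n ε v w = 1 := by
  rw [Fintype.sum_prod_type]
  have h : ∀ a : Fin n → Bool, ∑ c : Bool, Pv n ε v (a, c) = (1 / 2 : ℝ) ^ n := by
    intro a
    rw [Fintype.sum_bool]
    unfold Pv
    cases h : a v <;> simp [h] <;> ring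
  simp only [h]
  rw [Finset.sum_const, Finset.card_univ, nsmul_eq_mul, card_fun_bool, ← mul_pow]
  norm_num

lemma sum_prodP (n T : ℕ) (P : Omg n → ℝ) (h : ∑ w : Omg n, P w = 1) :
    ∑ g : Fin T → Omg n, prodP T P g = 1 := by
  have h2 := Finset.prod_univ_sum (fun _ : Fin T => (Finset.univ : Finset (Omg n)))
    (fun _ w => P w)
  rw [Fintype.piFinset_univ] at h2
  unfold prodP
  rw [← h2]
  simp [h]

lemma Pv_pos (n : ℕ) (ε : ℝ) (hε : 0 < ε) (hε' : ε < 1 / 2) (v : Fin n) (w : Omg n) :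
    0 < Pv n ε v w := by
  unfold Pv
  have h1 : (0:ℝ) < (1 / 2 : ℝ) ^ n := by positivity
  by_cases h : w.2 = w.1 v
  · rw [if_pos h]; nlinarith
  · rw [if_neg h]; nlinarith

lemma kl_le_log_chi {α : Type*} [Fintype α] (P Q : α → ℝ)
    (hP : ∀ g, 0 < P g) (hQ : ∀ g, 0 < Q g) (hsum : ∑ g, P g = 1) :
    klDiv P Q ≤ Real.log (∑ g, P g ^ 2 / Q g) := by
  have hconc : ConcaveOn ℝ (Set.Ioi 0) Real.log := strictConcaveOn_log_Ioi.concaveOn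
  have hj := hconc.le_map_sum (t := Finset.univ) (w := P) (p := fun g => P g / Q g)
    (fun i _ => (hP i).le) hsum (fun i _ => by
      simp only [Set.mem_Ioi]
      exact div_pos (hP i) (hQ i))
  have h1 : ∑ g, P g • Real.log (P g / Q g) = klDiv P Q := by
    unfold klDiv
    simp [smul_eq_mul]
  have h2 : ∑ g, P g • (P g / Q g) = ∑ g, P g ^ 2 / Q g := by
    apply Finset.sum_congr rfl
    intro g _
    rw [smul_eq_mul, sq, mul_div_assoc]
  rw [h1, h2] at hj
  exact hj

lemma chi_eq (n T : ℕ) (ε : ℝ) (hn : 0 < n) :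
    ∑ g : Fin T → Omg n, Pmix n ε T g ^ 2 / prodP T (P0 n) g
      = 1 + ((1 + 4 * ε ^ 2) ^ T - 1) / n := by
  have h1 : ∀ g : Fin T → Omg n, Pmix n ε T g ^ 2 / prodP T (P0 n) g
      = (1 / (n : ℝ)) ^ 2 * ∑ u : Fin n, ∑ v : Fin n,
          prodP T (Pv n ε u) g * prodP T (Pv n ε v) g / prodP T (P0 n) g := by
    intro g
    have hx : Pmix n ε T g ^ 2 = (1 / (n : ℝ)) ^ 2 * ∑ u : Fin n, ∑ v : Fin n,
        prodP T (Pv n ε u) g * prodP T (Pv n ε v) g := by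
      unfold Pmix
      rw [mul_pow, sq (∑ v : Fin n, prodP T (Pv n ε v) g), Finset.sum_mul_sum]
    rw [hx, mul_div_assoc, Finset.sum_div]
    congr 1
    refine Finset.sum_congr rfl (fun u _ => ?_)
    rw [Finset.sum_div]
  simp only [h1]
  rw [← Finset.mul_sum, Finset.sum_comm]
  have h3 : ∀ u : Fin n, ∑ g : Fin T → Omg n, ∑ v : Fin n,
      prodP T (Pv n ε u) g * prodP T (Pv n ε v) g / prodP T (P0 n) g
      = (1 + 4 * ε ^ 2) ^ T + ((n : ℝ) - 1) := by
    intro u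
    rw [Finset.sum_comm]
    have h4 : ∀ v : Fin n, ∑ g : Fin T → Omg n,
        prodP T (Pv n ε u) g * prodP T (Pv n ε v) g / prodP T (P0 n) g
        = (if u = v then ((1 + 4 * ε ^ 2) ^ T - 1) else 0) + 1 := by
      intro v
      rw [prod_chi]
      by_cases h : u = v <;> simp [h]
    simp only [h4]
    rw [Finset.sum_add_distrib, Finset.sum_ite_eq, Finset.sum_const, Finset.card_univ,
      Fintype.card_fin]
    simp only [Finset.mem_univ, if_pos, nsmul_eq_mul, mul_one]
    ring
  simp only [h3]
  rw [Finset.sum_const, Finset.card_univ, Fintype.card_fin, nsmul_eq_mul]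
  have hn' : (n : ℝ) ≠ 0 := by positivity
  field_simp
  ring

/-- if `4ε²T ≤ ln(n/10)` then `D_KL(P_mix^T ‖ P_0^T) ≤ 1/10`. -/
theorem stmt9 (n T : ℕ) (ε : ℝ) (hε : 0 < ε) (hε' : ε ≤ 0.1) (hn : 10 ≤ n) (hT : 1 ≤ T)
    (hεT : 4 * ε ^ 2 * (T : ℝ) ≤ Real.log ((n : ℝ) / 10)) :
    klDiv (Pmix n ε T) (prodP T (P0 n)) ≤ 1 / 10 := by
  have hn0 : 0 < n := by omega
  have hnR : (0:ℝ) < n := by exact_mod_cast hn0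
  have hε2 : ε < 1 / 2 := by norm_num at hε' ⊢; linarith
  -- positivity of the distributions
  have hQpos : ∀ g : Fin T → Omg n, 0 < prodP T (P0 n) g := by
    intro g
    unfold prodP P0
    positivity
  have hPpos : ∀ g : Fin T → Omg n, 0 < Pmix n ε T g := by
    intro g
    unfold Pmix
    have : ∀ v : Fin n, 0 < prodP T (Pv n ε v) g := by
      intro v
      unfold prodP
      exact Finset.prod_pos (fun t _ => Pv_pos n ε hε hε2 v (g t))
    have hne : Nonempty (Fin n) := ⟨⟨0, hn0⟩⟩
    have hs : 0 < ∑ v : Fin n, prodP T (Pv n ε v) g :=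
      Finset.sum_pos (fun v _ => this v) Finset.univ_nonempty
    positivity
  have hsum : ∑ g : Fin T → Omg n, Pmix n ε T g = 1 := by
    unfold Pmix
    rw [← Finset.mul_sum, Finset.sum_comm]
    have : ∀ v : Fin n, ∑ g : Fin T → Omg n, prodP T (Pv n ε v) g = 1 :=
      fun v => sum_prodP n T _ (sum_Pv n ε v)
    simp only [this]
    rw [Finset.sum_const, Finset.card_univ, Fintype.card_fin, nsmul_eq_mul, mul_one]
    field_simp
  have hkl := kl_le_log_chi (Pmix n ε T) (prodP T (P0 n)) hPpos hQpos hsum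
  rw [chi_eq n T ε hn0] at hkl
  -- bound the chi-square quantity
  have hexp : (1 + 4 * ε ^ 2) ^ T ≤ (n : ℝ) / 10 := by
    have h1 : (1 + 4 * ε ^ 2 : ℝ) ≤ Real.exp (4 * ε ^ 2) := by
      have := Real.add_one_le_exp (4 * ε ^ 2)
      linarith
    have h2 : (1 + 4 * ε ^ 2 : ℝ) ^ T ≤ Real.exp (4 * ε ^ 2) ^ T := by
      apply pow_le_pow_left₀ (by positivity) h1
    have h3 : Real.exp (4 * ε ^ 2) ^ T = Real.exp (4 * ε ^ 2 * T) := by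
      rw [← Real.exp_nat_mul]
      ring_nf
    have h4 : Real.exp (4 * ε ^ 2 * T) ≤ (n : ℝ) / 10 := by
      calc Real.exp (4 * ε ^ 2 * T) ≤ Real.exp (Real.log ((n : ℝ) / 10)) :=
            Real.exp_le_exp.mpr hεT
        _ = (n : ℝ) / 10 := Real.exp_log (by positivity)
    calc (1 + 4 * ε ^ 2 : ℝ) ^ T ≤ Real.exp (4 * ε ^ 2) ^ T := h2
      _ = Real.exp (4 * ε ^ 2 * T) := h3
      _ ≤ (n : ℝ) / 10 := h4
  have hchi_le : 1 + ((1 + 4 * ε ^ 2) ^ T - 1) / n ≤ 11 / 10 := by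
    have : ((1 + 4 * ε ^ 2) ^ T - 1) / n ≤ 1 / 10 := by
      rw [div_le_iff₀ hnR]
      nlinarith
    linarith
  have hchi_pos : (0:ℝ) < 1 + ((1 + 4 * ε ^ 2) ^ T - 1) / n := by
    have h1 : (1:ℝ) ≤ (1 + 4 * ε ^ 2) ^ T := by
      calc (1:ℝ) = 1 ^ T := (one_pow T).symm
        _ ≤ (1 + 4 * ε ^ 2) ^ T := pow_le_pow_left₀ zero_le_one (by nlinarith) T
    have : (0:ℝ) ≤ ((1 + 4 * ε ^ 2) ^ T - 1) / n := div_nonneg (by linarith) hnR.le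
    linarith
  have hlog : Real.log (1 + ((1 + 4 * ε ^ 2) ^ T - 1) / n) ≤ 1 / 10 := by
    calc Real.log (1 + ((1 + 4 * ε ^ 2) ^ T - 1) / n) ≤ Real.log (11 / 10) :=
          Real.log_le_log hchi_pos hchi_le
      _ ≤ 11 / 10 - 1 := Real.log_le_sub_one_of_pos (by norm_num)
      _ = 1 / 10 := by norm_num
  linarith
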